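/- Let M ∈ ℕ, ξ₀ ∈ ℝ, and define p_k = 8k(k+1)(k+2)(k+4)π, q_j = 1/(j+3), r_k = 24(k+1)(k+2)π, s_j = (j+2)²/(j+3) for natural numbers k, j. Let H, L, U be M×M real matrices such that: (i) H_{kj} = ξ₀(p_k q_j + r_k s_j) whenever j − k ≥ 6 and j − k is even; (ii) L has unit diagonal and L_{kj} = 0 unless j = k, j = k−2 or j = k−4; (iii) L·U = H. Define sequences a, b recursively by a₀ = p₀, a₁ = p₁, a₂ = p₂ − L_{2,0}a₀, a₃ = p₃ − L_{3,1}a₁, and a_k = p_k − L_{k,k−2}a_{k−2} − L_{k,k−4}a_{k−4} for k ≥ 4, with b defined in the same way with r in place of p. Then for all indices k, j < M with j − k ≥ 6 and j − k even, U_{kj} = ξ₀(a_k q_j + b_k s_j). -/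
import Mathlib


open Real

/-- `p_k = 8k(k+1)(k+2)(k+4)π`. -/
noncomputable def pCoef (k : ℕ) : ℝ := 8 * k * (k + 1) * (k + 2) * (k + 4) * Real.pi

/-- `q_j = 1/(j+3)`. -/
noncomputable def qCoef (j : ℕ) : ℝ := 1 / (j + 3)

/-- `r_k = 24(k+1)(k+2)π`. -/
noncomputable def rCoef (k : ℕ) : ℝ := 24 * (k + 1) * (k + 2) * Real.pi

/-- `s_j = (j+2)²/(j+3)`. -/
noncomputable def sCoef (j : ℕ) : ℝ := (j + 2) ^ 2 / (j + 3)

lemma sum_eval_aux (M : ℕ) (L U : ℕ → ℕ → ℝ) (k j : ℕ) (hk : k < M)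
    (hLdiag : L k k = 1)
    (hLzero : ∀ i, i < M → i ≠ k → k ≠ i + 2 → k ≠ i + 4 → L k i = 0) :
    ∑ i ∈ Finset.range M, L k i * U i j =
      U k j + (if 2 ≤ k then L k (k-2) * U (k-2) j else 0)
            + (if 4 ≤ k then L k (k-4) * U (k-4) j else 0) := by
  by_cases h4 : 4 ≤ k
  · have h2 : 2 ≤ k := by omega
    rw [if_pos h2, if_pos h4]
    have hs : ∑ i ∈ ({k-4, k-2, k} : Finset ℕ), L k i * U i j
        = ∑ i ∈ Finset.range M, L k i * U i j := by
      apply Finset.sum_subset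
      · intro x hx
        simp only [Finset.mem_insert, Finset.mem_singleton] at hx
        exact Finset.mem_range.mpr (by omega)
      · intro x hxM hxs
        simp only [Finset.mem_insert, Finset.mem_singleton] at hxs
        push_neg at hxs
        rw [hLzero x (Finset.mem_range.mp hxM) hxs.2.2 (by omega) (by omega)]
        ring
    rw [← hs]
    rw [Finset.sum_insert (by simp; omega), Finset.sum_insert (by simp; omega),
      Finset.sum_singleton, hLdiag]
    ring
  · by_cases h2 : 2 ≤ k
    · rw [if_pos h2, if_neg h4]
      have hs : ∑ i ∈ ({k-2, k} : Finset ℕ), L k i * U i j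
          = ∑ i ∈ Finset.range M, L k i * U i j := by
        apply Finset.sum_subset
        · intro x hx
          simp only [Finset.mem_insert, Finset.mem_singleton] at hx
          exact Finset.mem_range.mpr (by omega)
        · intro x hxM hxs
          simp only [Finset.mem_insert, Finset.mem_singleton] at hxs
          push_neg at hxs
          rw [hLzero x (Finset.mem_range.mp hxM) hxs.2 (by omega) (by omega)]
          ring
      rw [← hs, Finset.sum_insert (by simp; omega), Finset.sum_singleton, hLdiag]
      ring
    · rw [if_neg h2, if_neg h4]
      have hs : ∑ i ∈ ({k} : Finset ℕ), L k i * U i j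
          = ∑ i ∈ Finset.range M, L k i * U i j := by
        apply Finset.sum_subset
        · intro x hx
          simp only [Finset.mem_singleton] at hx
          exact Finset.mem_range.mpr (by omega)
        · intro x hxM hxs
          simp only [Finset.mem_singleton] at hxs
          rw [hLzero x (Finset.mem_range.mp hxM) hxs (by omega) (by omega)]
          ring
      rw [← hs, Finset.sum_singleton, hLdiag]
      ring

/-- Structure of the dense upper factor in the pivot-free LU decomposition of the
biharmonic coefficient matrix: beyond the fourth superdiagonal the entries of `U`
are the rank-two combination `ξ₀ (a_k q_j + b_k s_j)`. -/
theorem biharmonic_LU_upper_structure (M : ℕ) (ξ₀ : ℝ)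
    (H L U : ℕ → ℕ → ℝ) (a b : ℕ → ℝ)
    -- (i) the entries of H far above the diagonal
    (hH : ∀ k j, k < M → j < M → k + 6 ≤ j → (j - k) % 2 = 0 →
      H k j = ξ₀ * (pCoef k * qCoef j + rCoef k * sCoef j))
    -- (ii) L is unit lower triangular with nonzeros only on subdiagonals 2 and 4
    (hLdiag : ∀ k, k < M → L k k = 1)
    (hLzero : ∀ k j, k < M → j < M → j ≠ k → k ≠ j + 2 → k ≠ j + 4 → L k j = 0)
    -- (iii) L·U = H
    (hLU : ∀ k j, k < M → j < M → ∑ i ∈ Finset.range M, L k i * U i j = H k j)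
    -- the recursively defined vectors a and b
    (ha0 : a 0 = pCoef 0) (ha1 : a 1 = pCoef 1)
    (ha2 : a 2 = pCoef 2 - L 2 0 * a 0) (ha3 : a 3 = pCoef 3 - L 3 1 * a 1)
    (ha : ∀ k, 4 ≤ k → a k = pCoef k - L k (k - 2) * a (k - 2) - L k (k - 4) * a (k - 4))
    (hb0 : b 0 = rCoef 0) (hb1 : b 1 = rCoef 1)
    (hb2 : b 2 = rCoef 2 - L 2 0 * b 0) (hb3 : b 3 = rCoef 3 - L 3 1 * b 1)
    (hb : ∀ k, 4 ≤ k → b k = rCoef k - L k (k - 2) * b (k - 2) - L k (k - 4) * b (k - 4)) :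
    ∀ k j, k < M → j < M → k + 6 ≤ j → (j - k) % 2 = 0 →
      U k j = ξ₀ * (a k * qCoef j + b k * sCoef j) := by
  intro k
  induction k using Nat.strong_induction_on with
  | _ k IH =>
    intro j hk hj h6 hpar
    have hsum := sum_eval_aux M L U k j hk (hLdiag k hk)
      (fun i hi h1 h2 h3 => hLzero k i hk hi h1 h2 h3)
    rw [hLU k j hk hj, hH k j hk hj h6 hpar] at hsum
    by_cases h4 : 4 ≤ k
    · have h2 : 2 ≤ k := by omega
      rw [if_pos h2, if_pos h4] at hsum
      rw [IH (k-2) (by omega) j (by omega) hj (by omega) (by omega),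
          IH (k-4) (by omega) j (by omega) hj (by omega) (by omega)] at hsum
      have hU : U k j = ξ₀ * (pCoef k * qCoef j + rCoef k * sCoef j)
          - L k (k-2) * (ξ₀ * (a (k-2) * qCoef j + b (k-2) * sCoef j))
          - L k (k-4) * (ξ₀ * (a (k-4) * qCoef j + b (k-4) * sCoef j)) := by
        linarith [hsum]
      rw [hU, ha k h4, hb k h4]; ring
    · by_cases h2 : 2 ≤ k
      · rw [if_pos h2, if_neg h4] at hsum
        rw [IH (k-2) (by omega) j (by omega) hj (by omega) (by omega)] at hsum
        have hU : U k j = ξ₀ * (pCoef k * qCoef j + rCoef k * sCoef j)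
            - L k (k-2) * (ξ₀ * (a (k-2) * qCoef j + b (k-2) * sCoef j)) := by
          linarith [hsum]
        interval_cases k
        · rw [hU]; norm_num; rw [ha2, hb2, ha0, hb0]; ring
        · rw [hU]; norm_num; rw [ha3, hb3, ha1, hb1]; ring
      · rw [if_neg h2, if_neg h4] at hsum
        have hU : U k j = ξ₀ * (pCoef k * qCoef j + rCoef k * sCoef j) := by
          linarith [hsum]
        interval_cases k
        · rw [hU, ha0, hb0]
        · rw [hU, ha1, hb1]
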